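/- arXiv:2012.11128 — 3 statements merged into one kernel-verified Lean document; each statement's English description precedes it below -/
import Mathlib

section
/- Let G be a directed graph with vertices s, t and hop constraint k. Let G' be the subgraph of G induced by the vertex set N = {u ∈ V(G) : sd(s,u) + sd(u,t) ≤ k}, where sd denotes shortest-path distance (number of edges). Then a path p is a simple s-t path in G of length at most k if and only if p is a simple s-t path in G' of length at most k. -/
variable {V : Type*}

/-- `p` is a (nonempty) directed path/walk from `s` to `t` in the graph with edge
relation `E`: consecutive vertices are joined by edges, it starts at `s` and ends at `t`. -/
def IsPath (E : V → V → Prop) (s t : V) (p : List V) : Prop :=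
  p.Chain' E ∧ p.head? = some s ∧ p.getLast? = some t

/-- A simple path: a path with no repeated vertices. -/
def IsSimplePath (E : V → V → Prop) (s t : V) (p : List V) : Prop :=
  IsPath E s t p ∧ p.Nodup

/-- The length (number of edges) of a path given as a vertex list. -/
def len (p : List V) : ℕ := p.length - 1

/-- Directed shortest-path distance (number of edges), `⊤` if unreachable. -/
noncomputable def sd (E : V → V → Prop) (u v : V) : ℕ∞ :=
  sInf {n : ℕ∞ | ∃ p : List V, IsPath E u v p ∧ (len p : ℕ∞) = n}

lemma sd_le_of_path {E : V → V → Prop} {u v : V} {q : List V} (h : IsPath E u v q) :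
    sd E u v ≤ (len q : ℕ∞) :=
  sInf_le ⟨q, h, rfl⟩

lemma chain'_strengthen {E : V → V → Prop} {C : V → Prop} :
    ∀ {p : List V}, p.Chain' E → (∀ v ∈ p, C v) →
      p.Chain' (fun a b => E a b ∧ C a ∧ C b)
  | [], _, _ => List.isChain_nil
  | [_], _, _ => List.isChain_singleton _
  | a :: b :: l, h, hC => by
      rw [List.Chain', List.isChain_cons_cons] at h ⊢
      exact ⟨⟨h.1, hC a (by simp), hC b (by simp)⟩,
        chain'_strengthen h.2 (fun v hv => hC v (by simp [hv]))⟩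

/-- enumeration on `G` equals enumeration on the subgraph induced by
`N = {u | sd(s,u) + sd(u,t) ≤ k}`. -/
theorem induced_subgraph_preserves_st_k_paths (E : V → V → Prop) (s t : V) (k : ℕ)
    (p : List V) :
    (IsSimplePath E s t p ∧ len p ≤ k) ↔
      (IsSimplePath (fun a b => E a b ∧ sd E s a + sd E a t ≤ (k : ℕ∞) ∧
          sd E s b + sd E b t ≤ (k : ℕ∞)) s t p ∧
        (∀ v ∈ p, sd E s v + sd E v t ≤ (k : ℕ∞)) ∧ len p ≤ k) := by
  constructor
  · rintro ⟨⟨⟨hc, hh, hl⟩, hnd⟩, hlen⟩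
    have key : ∀ v ∈ p, sd E s v + sd E v t ≤ (k : ℕ∞) := by
      intro v hv
      obtain ⟨l₁, l₂, rfl⟩ := List.append_of_mem hv
      have h1 : IsPath E s v (l₁ ++ [v]) := by
        refine ⟨hc.prefix ⟨l₂, by simp⟩, ?_, by simp⟩
        cases l₁ with
        | nil => simpa using hh
        | cons a l => simpa using hh
      have h2 : IsPath E v t (v :: l₂) := by
        refine ⟨hc.suffix ⟨l₁, rfl⟩, by simp, ?_⟩
        rwa [List.getLast?_append_cons] at hl
      have e1 : len (l₁ ++ [v]) = l₁.length := by simp [len]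
      have e2 : len (v :: l₂) = l₂.length := by simp [len]
      have e3 : len (l₁ ++ v :: l₂) = l₁.length + l₂.length := by
        simp only [len, List.length_append, List.length_cons]; omega
      calc sd E s v + sd E v t ≤ (len (l₁ ++ [v]) : ℕ∞) + (len (v :: l₂) : ℕ∞) :=
            add_le_add (sd_le_of_path h1) (sd_le_of_path h2)
        _ = ((len (l₁ ++ v :: l₂) : ℕ) : ℕ∞) := by
            rw [e1, e2, e3]; exact_mod_cast rfl
        _ ≤ (k : ℕ∞) := by exact_mod_cast hlen
    exact ⟨⟨⟨chain'_strengthen hc key, hh, hl⟩, hnd⟩, key, hlen⟩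
  · rintro ⟨⟨⟨hc, hh, hl⟩, hnd⟩, _, hlen⟩
    exact ⟨⟨⟨hc.imp (fun a b h => h.1), hh, hl⟩, hnd⟩, hlen⟩
end

section
/- The expansion-and-verification BFS algorithm enumerates exactly the simple s-t paths of length at most k: starting from the singleton path (s), repeatedly extending every intermediate path p by each out-neighbor u of its endpoint such that u = t (output p·u), or u ∉ p and len(p) + 1 + sd(u,t) ≤ k (keep p·u as intermediate), outputs each simple s-t path of length at most k exactly once, and terminates after at most k rounds. -/
variable {V : Type*}

/-- Intermediate paths kept by the expansion-and-verification BFS: start from the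
singleton path `[s]`; extend a kept path by a successor `u` when `u ≠ t`, `u` is
unvisited, and the barrier check `len p + 1 + sd(u,t) ≤ k` passes. -/
inductive Kept (E : V → V → Prop) (s t : V) (k : ℕ) : List V → Prop
  | init : Kept E s t k [s]
  | step {p : List V} {v u : V} :
      Kept E s t k p → p.getLast? = some v → E v u → u ≠ t → u ∉ p →
      (len p : ℕ∞) + 1 + sd E u t ≤ (k : ℕ∞) → Kept E s t k (p ++ [u])

/-- A path output by the algorithm: a kept path extended by an edge to `t`. -/
def Output (E : V → V → Prop) (s t : V) (k : ℕ) (q : List V) : Prop :=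
  ∃ (p : List V) (v : V), Kept E s t k p ∧ p.getLast? = some v ∧ E v t ∧ q = p ++ [t]

lemma sd_le_len (E : V → V → Prop) {u v : V} {p : List V} (h : IsPath E u v p) :
    sd E u v ≤ (len p : ℕ∞) := sInf_le ⟨p, h, rfl⟩

lemma mem_of_getLast?' {l : List V} {a : V} (h : l.getLast? = some a) : a ∈ l := by
  have hne : l ≠ [] := by rintro rfl; simp at h
  rw [List.getLast?_eq_getLast hne] at h
  simp at h
  rw [← h]; exact List.getLast_mem hne

lemma one_le_sd (E : V → V → Prop) {u v : V} (h : u ≠ v) : 1 ≤ sd E u v := by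
  refine le_sInf ?_
  rintro n ⟨p, ⟨hc, hh, hl⟩, rfl⟩
  by_contra hlt
  push_neg at hlt
  have h0 : (len p : ℕ∞) = 0 := by
    rcases (ENat.lt_one_iff_eq_zero).mp hlt with h; exact h
  have h0' : len p = 0 := by exact_mod_cast h0
  have hne : p ≠ [] := by rintro rfl; simp at hh
  have hlen1 : p.length = 1 := by
    have := List.length_pos_iff.mpr hne
    unfold len at h0'; omega
  obtain ⟨a, rfl⟩ := List.length_eq_one_iff.mp hlen1
  simp at hh hl
  exact h (hh.symm.trans hl)

lemma kept_inv {E : V → V → Prop} {s t : V} {k : ℕ} (hts : t ≠ s) (hk : 1 ≤ k)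
    {p : List V} (hp : Kept E s t k p) :
    p.Chain' E ∧ p.head? = some s ∧ p.Nodup ∧ t ∉ p ∧ len p + 1 ≤ k := by
  induction hp with
  | init =>
    refine ⟨by simp [List.Chain'], rfl, by simp, by simpa using hts, by simp [len]; omega⟩
  | @step p v u hp hlast he hut hup hbar ih =>
    obtain ⟨hc, hh, hnd, hnt, hlen⟩ := ih
    have hpne : p ≠ [] := by rintro rfl; simp at hh
    have hplen : 1 ≤ p.length := List.length_pos_iff.mpr hpne
    refine ⟨?_, ?_, ?_, ?_, ?_⟩
    · rw [List.Chain', List.isChain_append]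
      refine ⟨hc, List.isChain_singleton _, ?_⟩
      intro x hx y hy
      rw [hlast] at hx
      simp at hx hy
      rw [← hx, ← hy]; exact he
    · cases p with
      | nil => simp at hh
      | cons a l => simpa using hh
    · simp [List.nodup_append, hnd, hup]
      intro a ha h; exact hup (h ▸ ha)
    · simp [hnt, Ne.symm hut]
    · have h1 : (len p : ℕ∞) + 1 + 1 ≤ (k : ℕ∞) :=
        le_trans (add_le_add_right (one_le_sd E hut) _) hbar
      have h2 : ((len p + 2 : ℕ) : ℕ∞) ≤ (k : ℕ∞) := by
        push_cast
        have : (len p : ℕ∞) + 2 = (len p : ℕ∞) + 1 + 1 := by ring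
        rw [this]; exact h1
      have h3 : len p + 2 ≤ k := by exact_mod_cast h2
      have : len (p ++ [u]) = len p + 1 := by
        simp [len]; omega
      omega

lemma kept_of_prefix {E : V → V → Prop} {s t : V} {k : ℕ}
    {q : List V} (hq : IsSimplePath E s t q) (hlen : len q ≤ k) :
    ∀ p r, q = p ++ r → p ≠ [] → r ≠ [] → Kept E s t k p := by
  obtain ⟨⟨hc, hh, hl⟩, hnd⟩ := hq
  intro p
  induction p using List.reverseRecOn with
  | nil => intro r _ hpne _; exact absurd rfl hpne
  | append_singleton p' u ih =>
    intro r heq _ hrne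
    rcases eq_or_ne p' [] with rfl | hp'
    · have hus : u = s := by
        rw [heq] at hh; simpa using hh
      rw [hus]; exact Kept.init
    · have heq' : q = p' ++ ([u] ++ r) := by rw [heq, List.append_assoc]
      have hkp' : Kept E s t k p' := ih ([u] ++ r) heq' hp' (by simp)
      have hv : p'.getLast? = some (p'.getLast hp') := List.getLast?_eq_getLast hp'
      have hcq := hc
      rw [heq', List.Chain', List.isChain_append] at hcq
      obtain ⟨hc1, hc2, hjun⟩ := hcq
      have hEvu : E (p'.getLast hp') u := hjun _ hv _ (by simp)
      -- nodup facts
      have hndq := hnd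
      rw [heq'] at hndq
      rw [List.nodup_append] at hndq
      obtain ⟨hnd1, hnd2, hdisj⟩ := hndq
      have hup' : u ∉ p' := fun h => hdisj u h u (by simp) rfl
      -- suffix path from u to t
      have hlsuf : ([u] ++ r).getLast? = some t := by
        rw [heq', List.getLast?_append_of_ne_nil _ (by simp : [u] ++ r ≠ [])] at hl
        exact hl
      have hpath : IsPath E u t ([u] ++ r) := ⟨hc2, by simp, hlsuf⟩
      have hut : u ≠ t := by
        have hgl : ([u] ++ r).getLast? = r.getLast? :=
          List.getLast?_append_of_ne_nil _ hrne
        have htr : t ∈ r := mem_of_getLast?' (hgl ▸ hlsuf)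
        rw [List.nodup_append] at hnd2
        intro h
        exact hnd2.2.2 u (by simp) t htr h
      -- barrier
      have hsd : sd E u t ≤ (r.length : ℕ∞) := by
        have := sd_le_len E hpath
        simpa [len] using this
      have hp'len : 1 ≤ p'.length := List.length_pos_iff.mpr hp'
      have hlq : len q = len p' + 1 + r.length := by
        rw [heq']; simp [len]; omega
      have hbar : (len p' : ℕ∞) + 1 + sd E u t ≤ (k : ℕ∞) := by
        calc (len p' : ℕ∞) + 1 + sd E u t ≤ (len p' : ℕ∞) + 1 + r.length :=
              add_le_add_right hsd _
          _ = ((len p' + 1 + r.length : ℕ) : ℕ∞) := by push_cast; ring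
          _ ≤ (k : ℕ∞) := by exact_mod_cast (hlq ▸ hlen)
      exact Kept.step hkp' hv hEvu hut hup' hbar

/-- the expansion-and-verification BFS outputs exactly the simple
`s`-`t` paths of length at most `k`, each exactly once, and every kept intermediate
path has length at most `k - 1` (so it terminates after at most `k` rounds). -/
theorem expansion_verification_correct (E : V → V → Prop) (s t : V) (k : ℕ)
    (hts : t ≠ s) (hk : 1 ≤ k) :
    (∀ q : List V, Output E s t k q ↔ (IsSimplePath E s t q ∧ len q ≤ k)) ∧
    (∀ q : List V, Output E s t k q → ∃! p : List V, Kept E s t k p ∧ q = p ++ [t]) ∧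
    (∀ p : List V, Kept E s t k p → len p ≤ k - 1) := by
  refine ⟨?_, ?_, ?_⟩
  · intro q
    constructor
    · rintro ⟨p, v, hkp, hlast, he, rfl⟩
      obtain ⟨hc, hh, hnd, hnt, hlen⟩ := kept_inv hts hk hkp
      have hpne : p ≠ [] := by rintro rfl; simp at hh
      have hplen : 1 ≤ p.length := List.length_pos_iff.mpr hpne
      refine ⟨⟨⟨?_, ?_, ?_⟩, ?_⟩, ?_⟩
      · rw [List.Chain', List.isChain_append]
        refine ⟨hc, List.isChain_singleton _, ?_⟩
        intro x hx y hy
        rw [hlast] at hx; simp at hx hy; rw [← hx, ← hy]; exact he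
      · cases p with
        | nil => simp at hh
        | cons a l => simpa using hh
      · simp
      · simp [List.nodup_append, hnd, hnt]
        intro a ha h; exact hnt (h ▸ ha)
      · simp [len] at hlen ⊢; omega
    · rintro ⟨hq, hlen⟩
      obtain ⟨⟨hc, hh, hl⟩, hnd⟩ := hq
      have hqne : q ≠ [] := by rintro rfl; simp at hh
      have hdecomp : q = q.dropLast ++ [t] := by
        conv_lhs => rw [← List.dropLast_append_getLast hqne]
        congr 1
        rw [List.getLast?_eq_getLast hqne] at hl
        simp at hl
        rw [hl]
      have hpne : q.dropLast ≠ [] := by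
        intro h
        rw [h] at hdecomp
        simp at hdecomp
        rw [hdecomp] at hh
        simp at hh
        exact hts hh
      have hkp : Kept E s t k q.dropLast :=
        kept_of_prefix ⟨⟨hc, hh, hl⟩, hnd⟩ hlen q.dropLast [t] hdecomp hpne (by simp)
      have hv : q.dropLast.getLast? = some (q.dropLast.getLast hpne) :=
        List.getLast?_eq_getLast hpne
      have hcq := hc
      rw [hdecomp, List.Chain', List.isChain_append] at hcq
      have hEvt : E (q.dropLast.getLast hpne) t := hcq.2.2 _ hv _ (by simp)
      exact ⟨q.dropLast, _, hkp, hv, hEvt, hdecomp⟩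
  · rintro q ⟨p, v, hkp, hlast, he, rfl⟩
    refine ⟨p, ⟨hkp, rfl⟩, ?_⟩
    rintro p' ⟨_, heq⟩
    exact List.append_cancel_right heq.symm
  · intro p hp
    have := (kept_inv hts hk hp).2.2.2.2
    omega
end

section
/- In the join framework, no s-t k-path is produced twice: two distinct pairs (p_l, p_r) and (p_l', p_r') joined at middle vertices m and m' respectively yield the same s-t path only if m = m', p_l = p_l' and p_r = p_r'. Hence the map from valid joinable pairs to s-t k-paths is injective. -/
variable {V : Type*}

/-- A valid joinable pair: a simple `s`-`m` path and a simple `m`-`t` path, disjoint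
except at `m`, whose concatenation has length at most `k` and has `m` as its middle
vertex (the `⌈(len+1)/2⌉`-th vertex). -/
def ValidPair (E : V → V → Prop) (s t : V) (k : ℕ) (m : V) (pl pr : List V) : Prop :=
  IsSimplePath E s m pl ∧ IsSimplePath E m t pr ∧
  (∀ x, x ∈ pl → x ∈ pr → x = m) ∧
  len (pl ++ pr.tail) ≤ k ∧
  (pl ++ pr.tail)[(len (pl ++ pr.tail) + 2) / 2 - 1]? = some m

lemma validpair_aux {E : V → V → Prop} {s t : V} {k : ℕ} {m : V} {pl pr : List V}
    (h : ValidPair E s t k m pl pr) :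
    pl ≠ [] ∧ pr = m :: pr.tail ∧
      pl.length - 1 = (len (pl ++ pr.tail) + 2) / 2 - 1 := by
  obtain ⟨⟨⟨_, hplh, hplL⟩, hplnd⟩, ⟨⟨_, hprh, hprL⟩, hprnd⟩, hdisj, hk, hmid⟩ := h
  have hplne : pl ≠ [] := by rintro rfl; simp at hplh
  have hprcons : pr = m :: pr.tail := by
    cases pr with
    | nil => simp at hprh
    | cons a l => simp only [List.head?_cons, Option.some.injEq] at hprh; simp [hprh]
  have hmnt : m ∉ pr.tail := by
    rw [hprcons] at hprnd
    exact (List.nodup_cons.mp hprnd).1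
  have hdisj2 : List.Disjoint pl pr.tail := by
    intro x hx hx'
    exact hmnt ((hdisj x hx (List.mem_of_mem_tail hx')) ▸ hx')
  have hpnd : (pl ++ pr.tail).Nodup :=
    List.Nodup.append hplnd (hprnd.sublist (List.tail_sublist pr)) hdisj2
  have hpos : 0 < pl.length := List.length_pos_iff.mpr hplne
  have hidx : (pl ++ pr.tail)[pl.length - 1]? = some m := by
    rw [List.getElem?_append, if_pos (Nat.sub_lt hpos one_pos)]
    rw [← List.getLast?_eq_getElem?]
    exact hplL
  refine ⟨hplne, hprcons, ?_⟩
  apply (List.getElem?_inj ?_ hpnd).mp (hidx.trans hmid.symm)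
  simp only [List.length_append]
  omega

/-- no duplicates in the join framework — two valid joinable pairs
producing the same concatenated `s`-`t` path coincide. -/
theorem join_no_duplicates (E : V → V → Prop) (s t : V) (k : ℕ)
    (m m' : V) (pl pr pl' pr' : List V)
    (h : ValidPair E s t k m pl pr) (h' : ValidPair E s t k m' pl' pr')
    (heq : pl ++ pr.tail = pl' ++ pr'.tail) :
    m = m' ∧ pl = pl' ∧ pr = pr' := by
  obtain ⟨hplne, hprcons, hlen⟩ := validpair_aux h
  obtain ⟨hplne', hprcons', hlen'⟩ := validpair_aux h'
  have hmid := h.2.2.2.2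
  have hmid' := h'.2.2.2.2
  rw [heq] at hmid
  have hmm' : m = m' := by
    rw [hmid'] at hmid
    exact (Option.some.injEq _ _ ▸ hmid.symm)
  have hlpos : 0 < pl.length := List.length_pos_iff.mpr hplne
  have hlpos' : 0 < pl'.length := List.length_pos_iff.mpr hplne'
  have hL : pl.length = pl'.length := by
    have : (len (pl ++ pr.tail) + 2) / 2 - 1 = (len (pl' ++ pr'.tail) + 2) / 2 - 1 := by
      rw [heq]
    omega
  obtain ⟨h1, h2⟩ := List.append_inj heq hL
  refine ⟨hmm', h1, ?_⟩
  rw [hprcons, hprcons', hmm', h2]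
end
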